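/- Let N ≥ 2, p_c = 2N/(N+1), M > 0, and define ρ(u) = u^{(N+1)/N}(log M − log u)^{(N+1)/(2N)} for 0 < u < M. Then with k = 1/(N+1), for every u ∈ (0, M): k·(ρ'(u))² − ρ(u)·ρ''(u) = u^{2/N}·[ ((N+1)/(2N))·(log M − log u)^{1/N} + ((N+1)/(4N))·(log M − log u)^{-(N-1)/N} ]. -/

import Mathlib

lemma hdaux (a b M x : ℝ) (hx : 0 < x) (hxM : x < M) :
    HasDerivAt (fun y : ℝ => y ^ a * (Real.log M - Real.log y) ^ b)
      (a * (x ^ (a-1) * (Real.log M - Real.log x) ^ b)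
        - b * (x ^ (a-1) * (Real.log M - Real.log x) ^ (b-1))) x := by
  have hL : 0 < Real.log M - Real.log x := sub_pos.2 (Real.log_lt_log hx hxM)
  have h1 : HasDerivAt (fun y : ℝ => y ^ a) (a * x ^ (a-1)) x :=
    Real.hasDerivAt_rpow_const (Or.inl hx.ne')
  have h2 : HasDerivAt (fun y : ℝ => Real.log M - Real.log y) (-x⁻¹) x := by
    exact (Real.hasDerivAt_log hx.ne').const_sub (Real.log M)
  have h3 : HasDerivAt (fun y : ℝ => (Real.log M - Real.log y) ^ b)
      (b * (Real.log M - Real.log x) ^ (b-1) * (-x⁻¹)) x := by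
    have := (Real.hasDerivAt_rpow_const (p := b) (Or.inl hL.ne')).comp x h2
    simpa [Function.comp_def] using this
  have h := h1.mul h3
  have hxa : x ^ (a - 1) = x ^ a * x⁻¹ := by
    rw [Real.rpow_sub hx, Real.rpow_one, div_eq_mul_inv]
  refine h.congr_deriv ?_
  rw [hxa]; ring

theorem stmt_4 (N : ℕ) (hN : 2 ≤ N) (M : ℝ) (hM : 0 < M)
    (k : ℝ) (hk : k = 1 / (N + 1))
    (ρ : ℝ → ℝ)
    (hρ : ∀ u : ℝ, 0 < u → u < M →
      ρ u = u ^ ((N + 1 : ℝ) / N) * (Real.log M - Real.log u) ^ ((N + 1 : ℝ) / (2 * N))) :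
    ∀ u : ℝ, 0 < u → u < M →
      k * (deriv ρ u) ^ 2 - ρ u * deriv (deriv ρ) u
        = u ^ ((2 : ℝ) / N) *
            (((N + 1 : ℝ) / (2 * N)) * (Real.log M - Real.log u) ^ ((1 : ℝ) / N)
              + ((N + 1 : ℝ) / (4 * N)) * (Real.log M - Real.log u) ^ (-((N - 1 : ℝ) / N))) := by
  intro u hu huM
  have hN0 : (N : ℝ) ≠ 0 := by
    have : (2 : ℝ) ≤ N := by exact_mod_cast hN
    linarith
  have hN1 : (N : ℝ) + 1 ≠ 0 := by
    have : (2 : ℝ) ≤ N := by exact_mod_cast hN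
    linarith
  have hL : 0 < Real.log M - Real.log u := sub_pos.2 (Real.log_lt_log hu huM)
  set a : ℝ := (N + 1) / N with ha
  set b : ℝ := (N + 1) / (2 * N) with hb
  set g : ℝ → ℝ := fun x =>
    a * (x ^ (a-1) * (Real.log M - Real.log x) ^ b)
      - b * (x ^ (a-1) * (Real.log M - Real.log x) ^ (b-1)) with hgdef
  -- deriv ρ = g on Ioo 0 M
  have hderiv1 : ∀ x ∈ Set.Ioo (0:ℝ) M, deriv ρ x = g x := by
    intro x hx
    have hmemx : Set.Ioo (0:ℝ) M ∈ nhds x := isOpen_Ioo.mem_nhds hx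
    have heq : ρ =ᶠ[nhds x]
        fun y => y ^ a * (Real.log M - Real.log y) ^ b := by
      filter_upwards [hmemx] with y hy
      exact hρ y hy.1 hy.2
    rw [heq.deriv_eq, (hdaux a b M x hx.1 hx.2).deriv]
  have hmem : Set.Ioo (0:ℝ) M ∈ nhds u := isOpen_Ioo.mem_nhds ⟨hu, huM⟩
  have h2 : deriv ρ =ᶠ[nhds u] g := by
    filter_upwards [hmem] with x hx
    exact hderiv1 x hx
  -- derivative of g at u
  have hg1 := (hdaux (a-1) b M u hu huM).const_mul a
  have hg2 := (hdaux (a-1) (b-1) M u hu huM).const_mul b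
  have hgd : HasDerivAt g
      (a * ((a-1) * (u ^ (a-1-1) * (Real.log M - Real.log u) ^ b)
          - b * (u ^ (a-1-1) * (Real.log M - Real.log u) ^ (b-1)))
        - b * ((a-1) * (u ^ (a-1-1) * (Real.log M - Real.log u) ^ (b-1))
          - (b-1) * (u ^ (a-1-1) * (Real.log M - Real.log u) ^ (b-1-1)))) u :=
    hg1.sub hg2
  have hdd : deriv (deriv ρ) u
      = a * ((a-1) * (u ^ (a-1-1) * (Real.log M - Real.log u) ^ b)
          - b * (u ^ (a-1-1) * (Real.log M - Real.log u) ^ (b-1)))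
        - b * ((a-1) * (u ^ (a-1-1) * (Real.log M - Real.log u) ^ (b-1))
          - (b-1) * (u ^ (a-1-1) * (Real.log M - Real.log u) ^ (b-1-1))) := by
    rw [h2.deriv_eq, hgd.deriv]
  rw [hderiv1 u ⟨hu, huM⟩, hdd, hρ u hu huM]
  set L : ℝ := Real.log M - Real.log u with hLdef
  have hgu : g u = a * (u ^ (a-1) * L ^ b) - b * (u ^ (a-1) * L ^ (b-1)) := rfl
  -- rewrite all powers in terms of X := u^(1/N) and c := L^(b-1)
  have eu1 : u ^ (a - 1) = u ^ ((1:ℝ)/N) := by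
    congr 1
    rw [ha]; field_simp; ring
  have eu2 : u ^ a = u * u ^ ((1:ℝ)/N) := by
    rw [show a = 1 + 1/N by rw [ha]; field_simp, Real.rpow_add hu, Real.rpow_one]
  have eu3 : u ^ (a - 1 - 1) = u ^ ((1:ℝ)/N) / u := by
    rw [show a - 1 - 1 = 1/N - 1 by rw [ha]; field_simp; ring, Real.rpow_sub hu, Real.rpow_one]
  have eu4 : u ^ ((2:ℝ)/N) = u ^ ((1:ℝ)/N) * u ^ ((1:ℝ)/N) := by
    rw [← Real.rpow_add hu]; ring_nf
  have eL1 : L ^ b = L * L ^ (b - 1) := by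
    conv_lhs => rw [show b = 1 + (b - 1) by ring]
    rw [Real.rpow_add hL, Real.rpow_one]
  have eL2 : L ^ (b - 1 - 1) = L ^ (b - 1) / L := by
    conv_lhs => rw [show b - 1 - 1 = (b - 1) - 1 by ring]
    rw [Real.rpow_sub hL, Real.rpow_one]
  have eL3 : L ^ ((1:ℝ)/N) = L * (L ^ (b - 1) * L ^ (b - 1)) := by
    rw [show (1:ℝ)/N = 1 + ((b-1) + (b-1)) by rw [hb]; field_simp; ring,
      Real.rpow_add hL, Real.rpow_one, Real.rpow_add hL]
  have eL4 : L ^ (-((N - 1 : ℝ)/N)) = L ^ (b - 1) * L ^ (b - 1) := by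
    rw [show -((N - 1 : ℝ)/N) = (b-1) + (b-1) by rw [hb]; field_simp; ring,
      Real.rpow_add hL]
  rw [hgu, eu1, eu2, eu3, eu4, eL1, eL2, eL3, eL4, hk, ha, hb]
  set X : ℝ := u ^ ((1:ℝ)/N)
  set c : ℝ := L ^ ((N + 1 : ℝ)/(2*N) - 1)
  field_simp
  ring
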